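/- Let G be a finite simple graph with positive real vertex weights ω, and let S be an independent set of G that is contained in every maximum ω-weight independent set of G. Let x ∈ N(S) satisfy ω(x) ≥ ω(S ∩ N(x)), and let y ∈ N(x) \ N[S] be such that ω(x) ≥ ω(S ∩ N(x)) + α_ω(G[(N(x) \ {y}) \ N[S]]). Then every maximum ω-weight independent set of G contains y. -/

import Mathlib

open scoped Classical

/-- `S` is an independent set of vertices in `G`: no two members are adjacent. -/
def IsIndepSet {V : Type*} (G : SimpleGraph V) (S : Finset V) : Prop :=
  ∀ a ∈ S, ∀ b ∈ S, ¬ G.Adj a b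

/-- The maximum total `w`-weight of an independent set of `G` contained in `A`
(the weighted independence number of the subgraph of `G` induced on `A`). -/
noncomputable def alphaOn {V : Type*} [Fintype V] (G : SimpleGraph V) (w : V → ℝ)
    (A : Set V) : ℝ :=
  sSup {x : ℝ | ∃ S : Finset V, ↑S ⊆ A ∧ IsIndepSet G S ∧ x = ∑ v ∈ S, w v}

/-- The maximum total `w`-weight of an independent set of `G`. -/
noncomputable def alpha {V : Type*} [Fintype V] (G : SimpleGraph V) (w : V → ℝ) : ℝ :=
  alphaOn G w Set.univ

/-- `S` is a maximum `w`-weight independent set of `G`. -/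
def IsMWIS {V : Type*} [Fintype V] (G : SimpleGraph V) (w : V → ℝ) (S : Finset V) : Prop :=
  IsIndepSet G S ∧ ∑ v ∈ S, w v = alpha G w

/-- The closed neighborhood `N[v]` of a vertex. -/
def closedNbhd {V : Type*} (G : SimpleGraph V) (v : V) : Set V :=
  insert v (G.neighborSet v)

/-- The open neighborhood `N(S)` of a set of vertices. -/
def setNbhd {V : Type*} (G : SimpleGraph V) (S : Set V) : Set V :=
  (⋃ s ∈ S, G.neighborSet s) \ S

/-- The closed neighborhood `N[S]` of a set of vertices. -/
def closedSetNbhd {V : Type*} (G : SimpleGraph V) (S : Set V) : Set V :=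
  setNbhd G S ∪ S

lemma sum_le_alphaOn {V : Type*} [Fintype V] (G : SimpleGraph V) (w : V → ℝ)
    (A : Set V) (B : Finset V) (hA : ↑B ⊆ A) (hind : IsIndepSet G B) :
    ∑ v ∈ B, w v ≤ alphaOn G w A := by
  have hbdd : BddAbove {x : ℝ | ∃ S : Finset V, ↑S ⊆ A ∧ IsIndepSet G S ∧ x = ∑ v ∈ S, w v} := by
    apply BddAbove.mono _ (Set.finite_range (fun S : Finset V => ∑ v ∈ S, w v)).bddAbove
    rintro r ⟨T, -, -, rfl⟩
    exact ⟨T, rfl⟩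
  exact le_csSup hbdd ⟨B, hA, hind, rfl⟩

theorem stmt_15 {V : Type*} [Fintype V] (G : SimpleGraph V) (w : V → ℝ)
    (hw : ∀ x, 0 < w x) (S : Finset V) (hSind : IsIndepSet G S)
    (hSall : ∀ T : Finset V, IsMWIS G w T → S ⊆ T)
    (x : V) (hx : x ∈ setNbhd G (↑S : Set V))
    (hchild : (∑ s ∈ S.filter (fun s => G.Adj x s), w s) ≤ w x)
    (y : V) (hyx : y ∈ G.neighborSet x) (hyS : y ∉ closedSetNbhd G (↑S : Set V))
    (hwt : (∑ s ∈ S.filter (fun s => G.Adj x s), w s) +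
        alphaOn G w ((G.neighborSet x \ {y}) \ closedSetNbhd G (↑S : Set V)) ≤ w x) :
    ∀ T : Finset V, IsMWIS G w T → y ∈ T := by
  intro T hT
  by_contra hyT
  obtain ⟨hTind, hTsum⟩ := hT
  have hST : S ⊆ T := hSall T ⟨hTind, hTsum⟩
  -- x has a neighbor s0 in S, and x ∉ S
  obtain ⟨hxU, hxS⟩ := hx
  simp only [Set.mem_iUnion, SimpleGraph.mem_neighborSet, Finset.mem_coe] at hxU
  obtain ⟨s0, hs0S, hs0x⟩ := hxU
  have hxT : x ∉ T := fun hxT => hTind s0 (hST hs0S) x hxT hs0x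
  -- define T'
  set F : Finset V := T.filter (fun v => ¬ G.Adj x v) with hF
  set T' : Finset V := insert x F with hT'
  have hxF : x ∉ F := fun h => hxT (Finset.mem_filter.mp h).1
  have hT'ind : IsIndepSet G T' := by
    intro a ha b hb hab
    rcases Finset.mem_insert.mp ha with rfl | ha
    · rcases Finset.mem_insert.mp hb with rfl | hb
      · exact G.loopless.irrefl _ hab
      · exact (Finset.mem_filter.mp hb).2 hab
    · rcases Finset.mem_insert.mp hb with rfl | hb
      · exact (Finset.mem_filter.mp ha).2 (hab.symm)
      · exact hTind a (Finset.mem_filter.mp ha).1 b (Finset.mem_filter.mp hb).1 hab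
  -- key bound on the weight of T ∩ N(x)
  set A1 : Finset V := T.filter (fun v => G.Adj x v) with hA1
  set B : Finset V := A1.filter (fun v => v ∉ S) with hB
  have hA1split : A1.filter (fun v => v ∈ S) = S.filter (fun s => G.Adj x s) := by
    ext v
    simp only [Finset.mem_filter, hA1]
    constructor
    · rintro ⟨⟨-, hadj⟩, hvS⟩; exact ⟨hvS, hadj⟩
    · rintro ⟨hvS, hadj⟩; exact ⟨⟨hST hvS, hadj⟩, hvS⟩
  have hBsub : ↑B ⊆ ((G.neighborSet x \ {y}) \ closedSetNbhd G (↑S : Set V)) := by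
    intro v hv
    simp only [Finset.coe_filter, Set.mem_setOf_eq, hB, hA1, Finset.mem_filter] at hv
    obtain ⟨⟨hvT, hadj⟩, hvS⟩ := hv
    have hvy : v ≠ y := fun h => hyT (h ▸ hvT)
    refine ⟨⟨hadj, hvy⟩, ?_⟩
    rintro (⟨hvU, -⟩ | hvS')
    · simp only [Set.mem_iUnion, SimpleGraph.mem_neighborSet, Finset.mem_coe] at hvU
      obtain ⟨s, hsS, hsv⟩ := hvU
      exact hTind s (hST hsS) v hvT hsv
    · exact hvS hvS'
  have hBind : IsIndepSet G B := fun a ha b hb =>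
    hTind a (Finset.mem_filter.mp (Finset.mem_filter.mp ha).1).1 b
      (Finset.mem_filter.mp (Finset.mem_filter.mp hb).1).1
  have hBle : ∑ v ∈ B, w v ≤ alphaOn G w ((G.neighborSet x \ {y}) \ closedSetNbhd G (↑S : Set V)) :=
    sum_le_alphaOn G w _ B hBsub hBind
  have hA1le : ∑ v ∈ A1, w v ≤ w x := by
    have := Finset.sum_filter_add_sum_filter_not A1 (fun v => v ∈ S) w
    calc ∑ v ∈ A1, w v
        = ∑ v ∈ A1.filter (fun v => v ∈ S), w v + ∑ v ∈ B, w v := this.symm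
      _ = ∑ s ∈ S.filter (fun s => G.Adj x s), w s + ∑ v ∈ B, w v := by rw [hA1split]
      _ ≤ w x := le_trans (add_le_add_right hBle _) hwt
  -- weight of T'
  have hT'sum : ∑ v ∈ T', w v = w x + ∑ v ∈ F, w v := Finset.sum_insert hxF
  have hTsplit : ∑ v ∈ A1, w v + ∑ v ∈ F, w v = ∑ v ∈ T, w v :=
    Finset.sum_filter_add_sum_filter_not T (fun v => G.Adj x v) w
  have hge : ∑ v ∈ T, w v ≤ ∑ v ∈ T', w v := by
    rw [hT'sum, ← hTsplit]
    linarith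
  have hle : ∑ v ∈ T', w v ≤ alpha G w :=
    sum_le_alphaOn G w Set.univ T' (by simp) hT'ind
  have hT'MWIS : IsMWIS G w T' := ⟨hT'ind, le_antisymm hle (hTsum ▸ hge)⟩
  have hs0T' : s0 ∈ T' := hSall T' hT'MWIS hs0S
  rcases Finset.mem_insert.mp hs0T' with rfl | h
  · exact G.loopless.irrefl s0 hs0x
  · exact (Finset.mem_filter.mp h).2 hs0x.symm
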